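/- Let I_F be the principal submatrix of the expected Fisher information matrix I(θ) of the rank-one PCP model obtained by deleting, for each p ∈ {2,…,P}, the row and column indexed by the first coordinate of a_p, so that I_F is a square matrix of order r = (Σ_{p=1}^P N_p) − P + 1. Then I_F is invertible (nonsingular of rank r). -/

import Mathlib

open Finset
open Matrix

noncomputable section

variable {P : ℕ} {N : Fin P → ℕ}

/-- Factor sum `λ_p = Σ_j a_p(j)`. -/
def lam1 (a : (p : Fin P) → Fin (N p) → ℝ) (p : Fin P) : ℝ :=
  ∑ j, a p j

/-- Index set of the parameter vector `θ`: a pair of a mode `p` and a coordinate of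
`a_p`; its cardinality is `Σ_p N_p`. -/
abbrev FullIdx (N : Fin P → ℕ) := (p : Fin P) × Fin (N p)

/-- **Expected Fisher information matrix of the rank-one PCP model**: the symmetric
`(Σ_p N_p) × (Σ_p N_p)` block matrix whose `(p,p)` diagonal block has `(i,j)` entry
`[i = j] · λ/(λ_p a_p(i))` and whose `(p,q)` off-diagonal block (`p ≠ q`) has every
entry equal to `λ/(λ_p λ_q)`, where `λ = λ_1 ⋯ λ_P`. -/
def fim (a : (p : Fin P) → Fin (N p) → ℝ) : Matrix (FullIdx N) (FullIdx N) ℝ :=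
  fun x y =>
    if x = y then (∏ p, lam1 a p) / (lam1 a x.1 * a x.1 x.2)
    else if x.1 = y.1 then 0
    else (∏ p, lam1 a p) / (lam1 a x.1 * lam1 a y.1)

/-- Retained indices: all coordinates of `a_1`, and all but the first coordinate of
each `a_p` for `p ∈ {2,…,P}`. -/
abbrev RetIdx (N : Fin P → ℕ) := {x : FullIdx N // (x.1 : ℕ) = 0 ∨ (x.2 : ℕ) ≠ 0}

/-- Deleted indices: the first coordinate of each `a_p` for `p ∈ {2,…,P}`. -/
abbrev DelIdx (N : Fin P → ℕ) := {x : FullIdx N // ¬((x.1 : ℕ) = 0 ∨ (x.2 : ℕ) ≠ 0)}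

/-- `I_F`: the principal submatrix of `I(θ)` on the retained indices. -/
def fimF (a : (p : Fin P) → Fin (N p) → ℝ) : Matrix (RetIdx N) (RetIdx N) ℝ :=
  fun x y => fim a x.1 y.1

/-- `I_{F,N}`: the deleted rows of `I(θ)` restricted to the retained columns. -/
def fimFN (a : (p : Fin P) → Fin (N p) → ℝ) : Matrix (DelIdx N) (RetIdx N) ℝ :=
  fun x y => fim a x.1 y.1

/-- `I_N`: the principal submatrix of `I(θ)` on the deleted indices. -/
def fimN (a : (p : Fin P) → Fin (N p) → ℝ) : Matrix (DelIdx N) (DelIdx N) ℝ :=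
  fun x y => fim a x.1 y.1

/-- The Fisher information matrix is symmetric. -/
lemma fim_symm (a : (p : Fin P) → Fin (N p) → ℝ) (x y : FullIdx N) :
    fim a x y = fim a y x := by
  unfold fim
  rcases eq_or_ne x y with h | h
  · subst h; rfl
  · rw [if_neg h, if_neg (Ne.symm h)]
    rcases eq_or_ne x.1 y.1 with h1 | h1
    · rw [if_pos h1, if_pos h1.symm]
    · rw [if_neg h1, if_neg (Ne.symm h1), mul_comm]

/-- Splitting a sum over all indices into retained indices only, when the function
vanishes on deleted indices. -/
lemma sum_split (f : FullIdx N → ℝ) (hf : ∀ x : DelIdx N, f x.1 = 0) :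
    ∑ x, f x = ∑ x : RetIdx N, f x.1 := by
  classical
  rw [← Equiv.sum_comp (Equiv.sumCompl (fun x : FullIdx N => (x.1 : ℕ) = 0 ∨ (x.2 : ℕ) ≠ 0)) f,
    Fintype.sum_sum_type]
  simp [hf]

/-- Sum over the sigma index type as an iterated sum. -/
lemma sum_sig (g : FullIdx N → ℝ) : ∑ x, g x = ∑ p, ∑ i, g ⟨p, i⟩ := by
  rw [← Finset.univ_sigma_univ, Finset.sum_sigma]

/-- The quadratic form of the full Fisher information matrix, written as a sum of
squares. -/
lemma quad_eq (a : (p : Fin P) → Fin (N p) → ℝ) (hN : ∀ p, 1 ≤ N p)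
    (ha : ∀ p j, 0 < a p j) (w : FullIdx N → ℝ) :
    w ⬝ᵥ (fim a *ᵥ w) =
      (∏ p, lam1 a p) *
        ((∑ p, (∑ i, a p i * (w ⟨p, i⟩ / a p i - (∑ j, w ⟨p, j⟩) / lam1 a p) ^ 2) / lam1 a p)
          + (∑ p, (∑ j, w ⟨p, j⟩) / lam1 a p) ^ 2) := by
  classical
  have hlam : ∀ p, 0 < lam1 a p := fun p =>
    Finset.sum_pos (fun i _ => ha p i) (⟨⟨0, hN p⟩, Finset.mem_univ _⟩)
  set L := ∏ p, lam1 a p with hL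
  set t : Fin P → ℝ := fun p => (∑ j, w ⟨p, j⟩) / lam1 a p with ht
  set u : FullIdx N → ℝ := fun x => w x / lam1 a x.1 with hu
  have htu : ∀ p, ∑ i, u ⟨p, i⟩ = t p := fun p => by
    simp only [hu, ht]; rw [Finset.sum_div]
  have h0 : w ⬝ᵥ (fim a *ᵥ w) = ∑ x, ∑ y, w x * fim a x y * w y := by
    simp [dotProduct, Matrix.mulVec, Finset.mul_sum, mul_assoc]
  have hdec : ∀ x y : FullIdx N, w x * fim a x y * w y =
      (if x = y then w x ^ 2 * (L / (lam1 a x.1 * a x.1 x.2)) else 0)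
        + L * (if x.1 = y.1 then 0 else u x * u y) := by
    intro x y
    unfold fim
    by_cases h : x = y
    · subst h
      rw [if_pos rfl, if_pos rfl, if_pos rfl]
      ring
    · rw [if_neg h, if_neg h]
      by_cases h1 : x.1 = y.1
      · rw [if_pos h1, if_pos h1]; ring
      · rw [if_neg h1, if_neg h1]
        simp only [hu]
        field_simp
        ring
  have h1 : ∑ x, ∑ y, w x * fim a x y * w y =
      (∑ x : FullIdx N, w x ^ 2 * (L / (lam1 a x.1 * a x.1 x.2)))
        + L * ∑ x : FullIdx N, ∑ y : FullIdx N, (if x.1 = y.1 then 0 else u x * u y) := by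
    simp_rw [hdec, Finset.sum_add_distrib, Finset.sum_ite_eq, Finset.mem_univ, if_pos,
      ← Finset.mul_sum]
  have h2 : ∑ x : FullIdx N, ∑ y : FullIdx N, (if x.1 = y.1 then 0 else u x * u y)
      = (∑ p, t p) ^ 2 - ∑ p, t p ^ 2 := by
    have inner : ∀ x : FullIdx N, ∑ y : FullIdx N, (if x.1 = y.1 then 0 else u x * u y)
        = u x * ((∑ p, t p) - t x.1) := by
      intro x
      rw [sum_sig (fun y => if x.1 = y.1 then 0 else u x * u y)]
      have e1 : ∀ q, ∑ j : Fin (N q), (if x.1 = q then 0 else u x * u ⟨q, j⟩)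
          = (if x.1 = q then (0:ℝ) else u x * t q) := by
        intro q
        by_cases h : x.1 = q
        · simp [h]
        · rw [if_neg h]
          simp only [if_neg h]
          rw [← Finset.mul_sum, htu q]
      simp_rw [e1]
      have e2 : ∀ q, (if x.1 = q then (0:ℝ) else u x * t q)
          = u x * t q - (if x.1 = q then u x * t q else 0) := by
        intro q; by_cases h : x.1 = q <;> simp [h]
      simp_rw [e2, Finset.sum_sub_distrib, Finset.sum_ite_eq, Finset.mem_univ, if_pos,
        ← Finset.mul_sum, mul_sub]
    simp_rw [inner]
    rw [sum_sig (fun x => u x * ((∑ p, t p) - t x.1))]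
    have e3 : ∀ p, ∑ i : Fin (N p), u ⟨p, i⟩ * ((∑ q, t q) - t p)
        = t p * ((∑ q, t q) - t p) := by
      intro p; rw [← Finset.sum_mul, htu]
    simp_rw [e3, mul_sub, Finset.sum_sub_distrib, ← Finset.sum_mul]
    simp [sq]
  have h3 : (∑ x : FullIdx N, w x ^ 2 * (L / (lam1 a x.1 * a x.1 x.2)))
      = L * ∑ p, (∑ i, w ⟨p, i⟩ ^ 2 / a p i) / lam1 a p := by
    rw [sum_sig (fun x => w x ^ 2 * (L / (lam1 a x.1 * a x.1 x.2))), Finset.mul_sum]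
    refine Finset.sum_congr rfl fun p _ => ?_
    rw [Finset.sum_div, Finset.mul_sum]
    refine Finset.sum_congr rfl fun i _ => ?_
    have h1 : lam1 a p ≠ 0 := (hlam p).ne'
    have h2 : a p i ≠ 0 := (ha p i).ne'
    field_simp
  have hgap : ∀ p, (∑ i, a p i * (w ⟨p, i⟩ / a p i - t p) ^ 2) / lam1 a p
      = (∑ i, w ⟨p, i⟩ ^ 2 / a p i) / lam1 a p - t p ^ 2 := by
    intro p
    have hl : lam1 a p ≠ 0 := (hlam p).ne'
    have e : ∑ i, a p i * (w ⟨p, i⟩ / a p i - t p) ^ 2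
        = (∑ i, w ⟨p, i⟩ ^ 2 / a p i) - 2 * t p * (∑ j, w ⟨p, j⟩) + t p ^ 2 * lam1 a p := by
      have e1 : ∀ i, a p i * (w ⟨p, i⟩ / a p i - t p) ^ 2
          = w ⟨p, i⟩ ^ 2 / a p i - 2 * t p * w ⟨p, i⟩ + t p ^ 2 * a p i := by
        intro i
        have h2 : a p i ≠ 0 := (ha p i).ne'
        field_simp
        ring
      simp_rw [e1, Finset.sum_add_distrib, Finset.sum_sub_distrib, ← Finset.mul_sum]
      rw [lam1]
    rw [e, ht]
    field_simp
    ring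
  rw [h0, h1, h2, h3]
  simp only [show ∀ p, (∑ j, w ⟨p, j⟩) / lam1 a p = t p from fun p => rfl]
  simp_rw [hgap, Finset.sum_sub_distrib]
  ring

/-- **Nonsingularity of the reduced Fisher information matrix.** The principal
submatrix `I_F` of the expected Fisher information of the rank-one PCP model, obtained
by deleting the row and column of the first coordinate of `a_p` for each
`p ∈ {2,…,P}`, is a square matrix of order `r = (Σ_p N_p) − P + 1` and is invertible
(nonsingular of full rank `r`). -/
theorem stmt_17 (P : ℕ) (hP : 2 ≤ P) (N : Fin P → ℕ) (hN : ∀ p, 1 ≤ N p)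
    (a : (p : Fin P) → Fin (N p) → ℝ) (ha : ∀ p j, 0 < a p j) :
    Fintype.card (RetIdx N) = (∑ p, N p) - P + 1 ∧ IsUnit (fimF a) := by
  classical
  have hPpos : 0 < P := by omega
  have hlam : ∀ p, 0 < lam1 a p := fun p =>
    Finset.sum_pos (fun i _ => ha p i) (⟨⟨0, hN p⟩, Finset.mem_univ _⟩)
  have hLpos : 0 < ∏ p, lam1 a p := Finset.prod_pos fun p _ => hlam p
  constructor
  · -- cardinality
    have hdel : Fintype.card (DelIdx N) = P - 1 := by
      have e : DelIdx N ≃ {p : Fin P // (p : ℕ) ≠ 0} :=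
        { toFun := fun x => ⟨x.1.1, by
            have hx := x.2; push_neg at hx; exact hx.1⟩
          invFun := fun p => ⟨⟨p.1, ⟨0, hN p.1⟩⟩, fun h => h.elim p.2 (fun h' => h' rfl)⟩
          left_inv := by
            rintro ⟨⟨p, i⟩, hx⟩
            push_neg at hx
            apply Subtype.ext
            have hi : (⟨0, hN p⟩ : Fin (N p)) = i := Fin.ext hx.2.symm
            subst hi
            rfl
          right_inv := fun p => rfl }
      rw [Fintype.card_congr e]
      have h1 : Fintype.card {p : Fin P // (p : ℕ) = 0} = 1 := by
        haveI : Unique {p : Fin P // (p : ℕ) = 0} :=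
          ⟨⟨⟨⟨0, hPpos⟩, rfl⟩⟩, fun x => Subtype.ext (Fin.ext x.2)⟩
        exact Fintype.card_unique
      have h2 := Fintype.card_subtype_compl (fun p : Fin P => (p : ℕ) = 0)
      rw [h1, Fintype.card_fin] at h2
      exact h2
    have hsum : Fintype.card (RetIdx N) + Fintype.card (DelIdx N) = ∑ p, N p := by
      have := Fintype.card_congr
        (Equiv.sumCompl (fun x : FullIdx N => (x.1 : ℕ) = 0 ∨ (x.2 : ℕ) ≠ 0))
      rw [Fintype.card_sum] at this
      rw [this]
      simp [Fintype.card_sigma]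
    have hPle : P ≤ ∑ p, N p := by
      calc P = ∑ _p : Fin P, 1 := by simp
        _ ≤ ∑ p, N p := Finset.sum_le_sum fun p _ => hN p
    omega
  · -- invertibility via positive definiteness
    have hpd : (fimF a).PosDef := by
      refine Matrix.posDef_iff_dotProduct_mulVec.mpr ⟨?_, ?_⟩
      · ext x y
        simp only [Matrix.conjTranspose_apply, RCLike.star_def, starRingEnd_apply, star_trivial]
        exact fim_symm a y.1 x.1
      · intro v hv
        rw [star_trivial]
        set w : FullIdx N → ℝ :=
          fun x => if h : ((x.1 : ℕ) = 0 ∨ (x.2 : ℕ) ≠ 0) then v ⟨x, h⟩ else 0 with hw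
        have hwv : ∀ x : RetIdx N, w x.1 = v x := by
          rintro ⟨x, hx⟩
          simp only [hw]
          rw [dif_pos hx]
        have hw0 : ∀ x : DelIdx N, w x.1 = 0 := by
          rintro ⟨x, hx⟩
          simp only [hw]
          rw [dif_neg hx]
        have key : v ⬝ᵥ (fimF a *ᵥ v) = w ⬝ᵥ (fim a *ᵥ w) := by
          have inner_eq : ∀ x : FullIdx N,
              ∑ y, fim a x y * w y = ∑ y : RetIdx N, fim a x y.1 * v y := by
            intro x
            rw [sum_split (fun y => fim a x y * w y) (fun y => by show fim a x ↑y * w ↑y = 0; rw [hw0 y, mul_zero])]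
            exact Finset.sum_congr rfl fun y _ => by rw [hwv]
          have lhs : v ⬝ᵥ (fimF a *ᵥ v)
              = ∑ x : RetIdx N, v x * ∑ y : RetIdx N, fim a x.1 y.1 * v y := by
            simp [dotProduct, Matrix.mulVec, fimF]
          have rhs : w ⬝ᵥ (fim a *ᵥ w) = ∑ x, w x * ∑ y, fim a x y * w y := by
            simp [dotProduct, Matrix.mulVec]
          rw [lhs, rhs,
            sum_split (fun x => w x * ∑ y, fim a x y * w y)
              (fun x => by show w ↑x * (∑ y, fim a (↑x) y * w y) = 0; rw [hw0 x, zero_mul])]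
          exact Finset.sum_congr rfl fun x _ => by rw [hwv, inner_eq]
        rw [key, quad_eq a hN ha w]
        set t : Fin P → ℝ := fun p => (∑ j, w ⟨p, j⟩) / lam1 a p with ht
        set S : ℝ := ∑ p, (∑ i, a p i * (w ⟨p, i⟩ / a p i - t p) ^ 2) / lam1 a p with hS
        have hSterm : ∀ p, 0 ≤ (∑ i, a p i * (w ⟨p, i⟩ / a p i - t p) ^ 2) / lam1 a p := by
          intro p
          apply div_nonneg _ (hlam p).le
          exact Finset.sum_nonneg fun i _ => mul_nonneg (ha p i).le (sq_nonneg _)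
        have hSnn : 0 ≤ S := Finset.sum_nonneg fun p _ => hSterm p
        by_contra hle
        push_neg at hle
        have hX : S + (∑ p, t p) ^ 2 ≤ 0 := by
          have h' : (∏ p, lam1 a p) * (S + (∑ p, t p) ^ 2) ≤ (∏ p, lam1 a p) * 0 := by
            rw [mul_zero]; exact hle
          exact le_of_mul_le_mul_left h' hLpos
        have hT2 : (0:ℝ) ≤ (∑ p, t p) ^ 2 := sq_nonneg _
        have hS0 : S = 0 := le_antisymm (by linarith) hSnn
        have hT0 : ∑ p, t p = 0 := by
          have : (∑ p, t p) ^ 2 = 0 := le_antisymm (by linarith) hT2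
          exact pow_eq_zero_iff (by norm_num) |>.mp this
        -- each coordinate satisfies w ⟨p,i⟩ = t p * a p i
        have hcoord : ∀ p i, w ⟨p, i⟩ = t p * a p i := by
          intro p i
          have hp0 : (∑ i, a p i * (w ⟨p, i⟩ / a p i - t p) ^ 2) / lam1 a p = 0 := by
            have := (Finset.sum_eq_zero_iff_of_nonneg
              (fun p _ => hSterm p)).mp hS0 p (Finset.mem_univ p)
            exact this
          have hsum0 : ∑ i, a p i * (w ⟨p, i⟩ / a p i - t p) ^ 2 = 0 := by
            rcases div_eq_zero_iff.mp hp0 with h | h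
            · exact h
            · exact absurd h (hlam p).ne'
          have hterm := (Finset.sum_eq_zero_iff_of_nonneg
            (fun i _ => mul_nonneg (ha p i).le (sq_nonneg _))).mp hsum0 i (Finset.mem_univ i)
          have hsq : (w ⟨p, i⟩ / a p i - t p) ^ 2 = 0 := by
            rcases mul_eq_zero.mp hterm with h | h
            · exact absurd h (ha p i).ne'
            · exact h
          have := pow_eq_zero_iff (n := 2) (by norm_num) |>.mp hsq
          have hd : w ⟨p, i⟩ / a p i = t p := by linarith
          rw [div_eq_iff (ha p i).ne'] at hd
          exact hd
        -- t p = 0 for p off the first mode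
        have ht0 : ∀ p : Fin P, (p : ℕ) ≠ 0 → t p = 0 := by
          intro p hp
          have hz : w ⟨p, ⟨0, hN p⟩⟩ = 0 :=
            hw0 ⟨⟨p, ⟨0, hN p⟩⟩, by push_neg; exact ⟨hp, rfl⟩⟩
          have := hcoord p ⟨0, hN p⟩
          rw [hz] at this
          have := this.symm
          rcases mul_eq_zero.mp this with h | h
          · exact h
          · exact absurd h (ha p _).ne'
        -- hence all t p = 0
        have htall : ∀ p, t p = 0 := by
          intro p
          by_cases hp : (p : ℕ) = 0
          · have hone : ∑ q, t q = t p := by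
              apply Finset.sum_eq_single p
              · intro q _ hq
                apply ht0
                intro hq0
                exact hq (Fin.ext (hq0.trans hp.symm))
              · intro h; exact absurd (Finset.mem_univ p) h
            rw [hone] at hT0
            exact hT0
          · exact ht0 p hp
        have hwz : ∀ x : FullIdx N, w x = 0 := by
          intro ⟨p, i⟩
          rw [hcoord p i, htall p, zero_mul]
        apply hv
        funext x
        rw [← hwv x, hwz]
        simp
    exact hpd.isUnit
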